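/- For every n < ω, the class of models of T_n^∀ has the joint embedding property and the amalgamation property: (JEP) any two models of T_n^∀ admit L_n-embeddings into a common model of T_n^∀; (AP) for any models A, B, C of T_n^∀ and L_n-embeddings f : A → B and g : A → C, there exist a model D of T_n^∀ and L_n-embeddings f′ : B → D and g′ : C → D with f′ ∘ f = g′ ∘ g. Here an L_n-embedding is an injective map that preserves and reflects each predicate P_η and relation <_η and commutes with all the functions ∧_η and G_{η,ν}. -/

import Mathlib

/-- An `L_n`-structure-candidate for the theory `T_n^∀`: carries data for the symbols of
`L_n` (only the data for sequences `η` of length at most `n`, resp. `< n` for the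
functions `G`, is relevant). -/
structure TreeModelN (n : ℕ) where
  carrier : Type
  P : List Bool → carrier → Prop
  lt : List Bool → carrier → carrier → Prop
  meet : List Bool → carrier → carrier → carrier
  G : List Bool → Bool → carrier → carrier

/-- `M` is a model of the universal theory `T_n^∀` (in the language `L_n`, whose symbols
are indexed by binary sequences of length `≤ n`). -/
structure IsModelN (n : ℕ) (M : TreeModelN n) : Prop where
  disj : ∀ η ν : List Bool, η.length ≤ n → ν.length ≤ n → η ≠ ν →
    ∀ x, M.P η x → ¬ M.P ν x
  lt_mem : ∀ η, η.length ≤ n → ∀ x y, M.lt η x y → M.P η x ∧ M.P η y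
  lt_irrefl : ∀ η, η.length ≤ n → ∀ x, ¬ M.lt η x x
  lt_trans : ∀ η, η.length ≤ n → ∀ x y z, M.lt η x y → M.lt η y z → M.lt η x z
  pred_linear : ∀ η, η.length ≤ n → ∀ x, M.P η x →
    ∀ y z, M.lt η y x → M.lt η z x → M.lt η y z ∨ M.lt η z y ∨ y = z
  meet_mem : ∀ η, η.length ≤ n → ∀ x y, M.P η x → M.P η y → M.P η (M.meet η x y)
  meet_le_left : ∀ η, η.length ≤ n → ∀ x y, M.P η x → M.P η y →
    M.lt η (M.meet η x y) x ∨ M.meet η x y = x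
  meet_le_right : ∀ η, η.length ≤ n → ∀ x y, M.P η x → M.P η y →
    M.lt η (M.meet η x y) y ∨ M.meet η x y = y
  meet_glb : ∀ η, η.length ≤ n → ∀ x y z, M.P η x → M.P η y → M.P η z →
    (M.lt η z x ∨ z = x) → (M.lt η z y ∨ z = y) →
    M.lt η z (M.meet η x y) ∨ z = M.meet η x y
  meet_id : ∀ η, η.length ≤ n → ∀ x y, ¬ M.P η x → M.meet η x y = x
  G_mem : ∀ η, η.length < n → ∀ (i : Bool) x, M.P η x → M.P (η ++ [i]) (M.G η i x)
  G_id : ∀ η, η.length < n → ∀ (i : Bool) x, ¬ M.P η x → M.G η i x = x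

/-- An `L_n`-embedding between models of `T_n^∀`: an injective map preserving and
reflecting each predicate `P_η` and relation `<_η` and commuting with the functions `∧_η`
and `G_{η,η⌢⟨i⟩}` (for the symbols of `L_n`, i.e. `η` of length `≤ n`, resp. `< n`). -/
def IsEmbN (n : ℕ) (M N : TreeModelN n) (f : M.carrier → N.carrier) : Prop :=
  Function.Injective f ∧
  (∀ η : List Bool, η.length ≤ n → ∀ x, N.P η (f x) ↔ M.P η x) ∧
  (∀ η : List Bool, η.length ≤ n → ∀ x y, N.lt η (f x) (f y) ↔ M.lt η x y) ∧
  (∀ η : List Bool, η.length ≤ n → ∀ x y, f (M.meet η x y) = N.meet η (f x) (f y)) ∧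
  (∀ η : List Bool, η.length < n → ∀ (i : Bool) x, f (M.G η i x) = N.G η i (f x))

namespace TreeAP

variable {n : ℕ}

/-- weak (reflexive) order associated to `M.lt`. -/
def mle (M : TreeModelN n) (η : List Bool) (x y : M.carrier) : Prop :=
  M.lt η x y ∨ x = y

theorem mle_refl (M : TreeModelN n) (η : List Bool) (x : M.carrier) : mle M η x x :=
  Or.inr rfl

section ModelLemmas

variable {M : TreeModelN n} {η : List Bool}

theorem lt_mle (hM : IsModelN n M) (hη : η.length ≤ n) {x y z : M.carrier}
    (h1 : M.lt η x y) (h2 : mle M η y z) : M.lt η x z := by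
  rcases h2 with h2 | rfl
  · exact hM.lt_trans η hη x y z h1 h2
  · exact h1

theorem mle_lt (hM : IsModelN n M) (hη : η.length ≤ n) {x y z : M.carrier}
    (h1 : mle M η x y) (h2 : M.lt η y z) : M.lt η x z := by
  rcases h1 with h1 | rfl
  · exact hM.lt_trans η hη x y z h1 h2
  · exact h2

theorem mle_trans (hM : IsModelN n M) (hη : η.length ≤ n) {x y z : M.carrier}
    (h1 : mle M η x y) (h2 : mle M η y z) : mle M η x z := by
  rcases h1 with h1 | rfl
  · exact Or.inl (lt_mle hM hη h1 h2)
  · exact h2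

theorem mle_antisymm (hM : IsModelN n M) (hη : η.length ≤ n) {x y : M.carrier}
    (h1 : mle M η x y) (h2 : mle M η y x) : x = y := by
  rcases h1 with h1 | rfl
  · rcases h2 with h2 | rfl
    · exact absurd (hM.lt_trans η hη x y x h1 h2) (hM.lt_irrefl η hη x)
    · rfl
  · rfl

theorem mle_lin (hM : IsModelN n M) (hη : η.length ≤ n) {x y z : M.carrier}
    (h1 : mle M η x z) (h2 : mle M η y z) : mle M η x y ∨ mle M η y x := by
  rcases h1 with h1 | rfl
  · rcases h2 with h2 | rfl
    · have hz := (hM.lt_mem η hη x z h1).2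
      rcases hM.pred_linear η hη z hz x y h1 h2 with h | h | h
      exacts [Or.inl (Or.inl h), Or.inr (Or.inl h), Or.inl (Or.inr h)]
    · exact Or.inl (Or.inl h1)
  · exact Or.inr h2

theorem P_of_lt_l (hM : IsModelN n M) (hη : η.length ≤ n) {x y : M.carrier}
    (h : M.lt η x y) : M.P η x := (hM.lt_mem η hη x y h).1

theorem P_of_lt_r (hM : IsModelN n M) (hη : η.length ≤ n) {x y : M.carrier}
    (h : M.lt η x y) : M.P η y := (hM.lt_mem η hη x y h).2

theorem P_of_mle (hM : IsModelN n M) (hη : η.length ≤ n) {x y : M.carrier}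
    (h : mle M η x y) (hy : M.P η y) : M.P η x := by
  rcases h with h | rfl
  exacts [P_of_lt_l hM hη h, hy]

theorem mle_meet (hM : IsModelN n M) (hη : η.length ≤ n) {x y z : M.carrier}
    (hx : M.P η x) (hy : M.P η y) (h1 : mle M η z x) (h2 : mle M η z y) :
    mle M η z (M.meet η x y) := by
  have hz : M.P η z := P_of_mle hM hη h1 hx
  exact hM.meet_glb η hη x y z hx hy hz h1 h2

theorem meet_mle_l (hM : IsModelN n M) (hη : η.length ≤ n) {x y : M.carrier}
    (hx : M.P η x) (hy : M.P η y) : mle M η (M.meet η x y) x :=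
  hM.meet_le_left η hη x y hx hy

theorem meet_mle_r (hM : IsModelN n M) (hη : η.length ≤ n) {x y : M.carrier}
    (hx : M.P η x) (hy : M.P η y) : mle M η (M.meet η x y) y :=
  hM.meet_le_right η hη x y hx hy

end ModelLemmas

section EmbLemmas

variable {A B : TreeModelN n} {f : A.carrier → B.carrier} {η : List Bool}

theorem embP (hf : IsEmbN n A B f) (hη : η.length ≤ n) {a : A.carrier} :
    B.P η (f a) ↔ A.P η a := hf.2.1 η hη a

theorem emblt (hf : IsEmbN n A B f) (hη : η.length ≤ n) {a a' : A.carrier} :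
    B.lt η (f a) (f a') ↔ A.lt η a a' := hf.2.2.1 η hη a a'

theorem embmle (hf : IsEmbN n A B f) (hη : η.length ≤ n) {a a' : A.carrier} :
    mle B η (f a) (f a') ↔ mle A η a a' := by
  unfold mle
  rw [emblt hf hη]
  constructor
  · rintro (h | h)
    exacts [Or.inl h, Or.inr (hf.1 h)]
  · rintro (h | h)
    exacts [Or.inl h, Or.inr (by rw [h])]

theorem embmeet (hf : IsEmbN n A B f) (hη : η.length ≤ n) {a a' : A.carrier} :
    f (A.meet η a a') = B.meet η (f a) (f a') := hf.2.2.2.1 η hη a a'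

theorem embG (hf : IsEmbN n A B f) (hη' : η.length < n) {i : Bool} {a : A.carrier} :
    f (A.G η i a) = B.G η i (f a) := hf.2.2.2.2 η hη' i a

end EmbLemmas


section Amalgam

variable (A B C : TreeModelN n) (f : A.carrier → B.carrier) (g : A.carrier → C.carrier)

/-- Bundle of the amalgamation hypotheses. -/
structure Good (A B C : TreeModelN n) (f : A.carrier → B.carrier)
    (g : A.carrier → C.carrier) : Prop where
  hA : IsModelN n A
  hB : IsModelN n B
  hC : IsModelN n C
  hf : IsEmbN n A B f
  hg : IsEmbN n A C g

/-- lower `A`-cut of an element of `B`. -/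
def Kb (η : List Bool) (b : B.carrier) : Set A.carrier := {a | mle B η (f a) b}

/-- lower `A`-cut of an element of `C`. -/
def Kc (η : List Bool) (c : C.carrier) : Set A.carrier := {a | mle C η (g a) c}

/-- `c` is an exact "gap mate" just below `b₁`. -/
def tie0 (η : List Bool) (c : C.carrier) (b₁ : B.carrier) : Prop :=
  Kb A B f η b₁ = Kc A C g η c ∧ (∀ a, mle B η b₁ (f a) ↔ mle C η c (g a)) ∧
    ∃ a, mle B η b₁ (f a)

/-- The amalgam preorder on `B ⊕ C`. -/
def Rle (η : List Bool) : B.carrier ⊕ C.carrier → B.carrier ⊕ C.carrier → Prop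
  | .inl b, .inl b' => mle B η b b'
  | .inr c, .inr c' => mle C η c c'
  | .inl b, .inr c => ∃ a, mle B η b (f a) ∧ mle C η (g a) c
  | .inr c, .inl b => (∃ a, mle C η c (g a) ∧ mle B η (f a) b) ∨
      ∃ b₁, mle B η b₁ b ∧ tie0 A B C f g η c b₁

variable {A B C f g}

theorem Rle_ll {η b b'} : Rle A B C f g η (.inl b) (.inl b') ↔ mle B η b b' := Iff.rfl
theorem Rle_rr {η c c'} : Rle A B C f g η (.inr c) (.inr c') ↔ mle C η c c' := Iff.rfl
theorem Rle_lr {η b c} : Rle A B C f g η (.inl b) (.inr c) ↔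
    ∃ a, mle B η b (f a) ∧ mle C η (g a) c := Iff.rfl
theorem Rle_rl {η c b} : Rle A B C f g η (.inr c) (.inl b) ↔
    (∃ a, mle C η c (g a) ∧ mle B η (f a) b) ∨
      ∃ b₁, mle B η b₁ b ∧ tie0 A B C f g η c b₁ := Iff.rfl

theorem Rle_refl {η : List Bool} (x : B.carrier ⊕ C.carrier) : Rle A B C f g η x x := by
  rcases x with b | c
  · exact mle_refl B η b
  · exact mle_refl C η c

theorem Rle_trans (hh : Good A B C f g) {η : List Bool} (hη : η.length ≤ n)
    {x y z : B.carrier ⊕ C.carrier}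
    (h1 : Rle A B C f g η x y) (h2 : Rle A B C f g η y z) : Rle A B C f g η x z := by
  obtain ⟨hA, hB, hC, hf, hg⟩ := hh
  rcases x with b | c <;> rcases y with b' | c' <;> rcases z with b'' | c''
  · exact mle_trans hB hη h1 h2
  · obtain ⟨a, h2a, h2b⟩ := h2
    exact ⟨a, mle_trans hB hη h1 h2a, h2b⟩
  · -- l r l
    obtain ⟨a, hbfa, hgac⟩ := h1
    rcases h2 with ⟨a', hcga', hfab⟩ | ⟨b₁, hb₁b, htie⟩
    · have h3 : mle A η a a' := (embmle hg hη).1 (mle_trans hC hη hgac hcga')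
      exact mle_trans hB hη hbfa (mle_trans hB hη ((embmle hf hη).2 h3) hfab)
    · have ha : a ∈ Kb A B f η b₁ := by rw [htie.1]; exact hgac
      exact mle_trans hB hη hbfa (mle_trans hB hη ha hb₁b)
  · -- l r r
    obtain ⟨a, hbfa, hgac⟩ := h1
    exact ⟨a, hbfa, mle_trans hC hη hgac h2⟩
  · -- r l l
    rcases h1 with ⟨a, h1a, h1b⟩ | ⟨b₁, hb₁, htie⟩
    · exact Or.inl ⟨a, h1a, mle_trans hB hη h1b h2⟩
    · exact Or.inr ⟨b₁, mle_trans hB hη hb₁ h2, htie⟩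
  · -- r l r
    obtain ⟨a', hb'fa', hga'c''⟩ := h2
    rcases h1 with ⟨a, hcga, hfab'⟩ | ⟨b₁, hb₁b', htie⟩
    · have h3 := (embmle hf hη).1 (mle_trans hB hη hfab' hb'fa')
      exact mle_trans hC hη hcga (mle_trans hC hη ((embmle hg hη).2 h3) hga'c'')
    · exact mle_trans hC hη ((htie.2.1 a').1 (mle_trans hB hη hb₁b' hb'fa')) hga'c''
  · -- r r l
    rcases h2 with ⟨a, h2a, h2b⟩ | ⟨b₁, hb₁b, htie⟩
    · exact Or.inl ⟨a, mle_trans hC hη h1 h2a, h2b⟩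
    · by_cases hthr : ∃ a, mle C η c (g a) ∧ mle B η (f a) b''
      · exact Or.inl hthr
      push_neg at hthr
      refine Or.inr ⟨b₁, hb₁b, ?_, ?_, htie.2.2⟩
      · -- Kb b₁ = Kc c
        have hKc : Kc A C g η c' = Kc A C g η c := by
          ext a₂
          constructor
          · intro h
            rcases mle_lin hC hη h1 h with h' | h'
            · exfalso
              have hmem : a₂ ∈ Kb A B f η b₁ := by rw [htie.1]; exact h
              exact hthr a₂ h' (mle_trans hB hη hmem hb₁b)
            · exact h'
          · intro h
            exact mle_trans hC hη h h1
        rw [htie.1, hKc]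
      · intro a₂
        constructor
        · intro h
          exact mle_trans hC hη h1 ((htie.2.1 a₂).1 h)
        · intro h
          have hnb : ¬ mle B η (f a₂) b₁ :=
            fun hb => hthr a₂ h (mle_trans hB hη hb hb₁b)
          obtain ⟨a₃, ha₃⟩ := htie.2.2
          have hc'ga₃ : mle C η c' (g a₃) := (htie.2.1 a₃).1 ha₃
          have hcga₃ : mle C η c (g a₃) := mle_trans hC hη h1 hc'ga₃
          have hPa₃ : A.P η a₃ := by
            rcases hc'ga₃ with hlt | heq
            · exact (embP hg hη).1 (P_of_lt_r hC hη hlt)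
            · exfalso
              have hmem : a₃ ∈ Kb A B f η b₁ := by
                rw [htie.1]; exact Or.inr heq.symm
              exact hthr a₃ hcga₃ (mle_trans hB hη hmem hb₁b)
          have hPa₂ : A.P η a₂ := by
            rcases h with hlt | heq
            · exact (embP hg hη).1 (P_of_lt_r hC hη hlt)
            · exfalso
              have hmem : a₂ ∈ Kc A C g η c' :=
                mle_trans hC hη (Or.inr heq.symm) h1
              rw [← htie.1] at hmem
              exact hnb hmem
          have hPga₃ : C.P η (g a₃) := (embP hg hη).2 hPa₃
          have hPga₂ : C.P η (g a₂) := (embP hg hη).2 hPa₂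
          have hcgm : mle C η c (g (A.meet η a₃ a₂)) := by
            rw [embmeet hg hη]
            exact mle_meet hC hη hPga₃ hPga₂ hcga₃ h
          have hgma₃ : mle C η (g (A.meet η a₃ a₂)) (g a₃) :=
            (embmle hg hη).2 (meet_mle_l hA hη hPa₃ hPa₂)
          rcases mle_lin hC hη hgma₃ hc'ga₃ with hgmc' | hc'gm
          · exfalso
            have hmem : A.meet η a₃ a₂ ∈ Kb A B f η b₁ := by
              rw [htie.1]; exact hgmc'
            exact hthr _ hcgm (mle_trans hB hη hmem hb₁b)
          · have hc'ga₂ : mle C η c' (g a₂) :=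
              mle_trans hC hη hc'gm ((embmle hg hη).2 (meet_mle_r hA hη hPa₃ hPa₂))
            exact (htie.2.1 a₂).2 hc'ga₂
  · exact mle_trans hC hη h1 h2

end Amalgam


section Lin

variable {A B C : TreeModelN n} {f : A.carrier → B.carrier} {g : A.carrier → C.carrier}

theorem core2 (hh : Good A B C f g) {η : List Bool} (hη : η.length ≤ n)
    {b : B.carrier} {c : C.carrier} {a₃ : A.carrier}
    (hb : mle B η b (f a₃)) (hc : mle C η c (g a₃)) :
    Rle A B C f g η (.inl b) (.inr c) ∨ Rle A B C f g η (.inr c) (.inl b) := by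
  obtain ⟨hA, hB, hC, hf, hg⟩ := hh
  by_cases hlr : ∃ a, mle B η b (f a) ∧ mle C η (g a) c
  · exact Or.inl hlr
  by_cases hrl : ∃ a, mle C η c (g a) ∧ mle B η (f a) b
  · exact Or.inr (Or.inl hrl)
  push_neg at hlr hrl
  have hclt : C.lt η c (g a₃) := by
    rcases hc with h | h
    · exact h
    · exact absurd (Or.inr h.symm : mle C η (g a₃) c) (hlr a₃ hb)
  have hPa₃ : A.P η a₃ := (embP hg hη).1 (P_of_lt_r hC hη hclt)
  have hK : Kb A B f η b = Kc A C g η c := by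
    ext a₄
    constructor
    · intro h4
      have hfa : mle B η (f a₄) (f a₃) := mle_trans hB hη h4 hb
      have hga : mle C η (g a₄) (g a₃) := (embmle hg hη).2 ((embmle hf hη).1 hfa)
      rcases mle_lin hC hη hga hc with h' | h'
      · exact h'
      · exact absurd h4 (hrl a₄ h')
    · intro h4
      have hga : mle C η (g a₄) (g a₃) := mle_trans hC hη h4 hc
      have hfa : mle B η (f a₄) (f a₃) := (embmle hf hη).2 ((embmle hg hη).1 hga)
      rcases mle_lin hB hη hfa hb with h' | h'
      · exact h'
      · exact absurd h4 (hlr a₄ h')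
  right; right
  refine ⟨b, mle_refl B η b, hK, ?_, ⟨a₃, hb⟩⟩
  intro a₄
  constructor
  · intro h4
    have hPa₄ : A.P η a₄ := by
      rcases h4 with hlt | heq
      · exact (embP hf hη).1 (P_of_lt_r hB hη hlt)
      · exfalso
        have hmem : a₄ ∈ Kc A C g η c := by rw [← hK]; exact Or.inr heq.symm
        exact hlr a₄ (Or.inr heq) hmem
    have hbfm : mle B η b (f (A.meet η a₃ a₄)) := by
      rw [embmeet hf hη]
      exact mle_meet hB hη ((embP hf hη).2 hPa₃) ((embP hf hη).2 hPa₄) hb h4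
    have hgm : mle C η (g (A.meet η a₃ a₄)) (g a₃) :=
      (embmle hg hη).2 (meet_mle_l hA hη hPa₃ hPa₄)
    rcases mle_lin hC hη hgm hc with h' | h'
    · exact absurd h' (hlr _ hbfm)
    · exact mle_trans hC hη h' ((embmle hg hη).2 (meet_mle_r hA hη hPa₃ hPa₄))
  · intro h4
    have hPa₄ : A.P η a₄ := by
      rcases h4 with hlt | heq
      · exact (embP hg hη).1 (P_of_lt_r hC hη hlt)
      · exfalso
        have hmem : a₄ ∈ Kb A B f η b := by rw [hK]; exact Or.inr heq.symm
        exact hrl a₄ (Or.inr heq) hmem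
    have hcgm : mle C η c (g (A.meet η a₃ a₄)) := by
      rw [embmeet hg hη]
      exact mle_meet hC hη ((embP hg hη).2 hPa₃) ((embP hg hη).2 hPa₄) hc h4
    have hfm : mle B η (f (A.meet η a₃ a₄)) (f a₃) :=
      (embmle hf hη).2 (meet_mle_l hA hη hPa₃ hPa₄)
    rcases mle_lin hB hη hfm hb with h' | h'
    · exact absurd h' (hrl _ hcgm)
    · exact mle_trans hB hη h' ((embmle hf hη).2 (meet_mle_r hA hη hPa₃ hPa₄))

theorem lin_lr (hh : Good A B C f g) {η : List Bool} (hη : η.length ≤ n)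
    {b : B.carrier} {c : C.carrier} {u : B.carrier ⊕ C.carrier}
    (h1 : Rle A B C f g η (.inl b) u) (h2 : Rle A B C f g η (.inr c) u) :
    Rle A B C f g η (.inl b) (.inr c) ∨ Rle A B C f g η (.inr c) (.inl b) := by
  rcases u with b₀ | c₀
  · rcases h2 with ⟨a₃, hcga₃, hfa₃b₀⟩ | ⟨b₁, hb₁b₀, htie⟩
    · rcases mle_lin hh.hB hη h1 hfa₃b₀ with h' | h'
      · exact core2 hh hη h' hcga₃
      · exact Or.inr (Or.inl ⟨a₃, hcga₃, h'⟩)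
    · rcases mle_lin hh.hB hη h1 hb₁b₀ with h' | h'
      · obtain ⟨a₃, ha₃⟩ := htie.2.2
        exact core2 hh hη (mle_trans hh.hB hη h' ha₃) ((htie.2.1 a₃).1 ha₃)
      · exact Or.inr (Or.inr ⟨b₁, h', htie⟩)
  · obtain ⟨a₃, hbfa₃, hga₃c₀⟩ := h1
    rcases mle_lin hh.hC hη h2 hga₃c₀ with h' | h'
    · exact core2 hh hη hbfa₃ h'
    · exact Or.inl ⟨a₃, hbfa₃, h'⟩

theorem lin_climb2 (hh : Good A B C f g) {η : List Bool} (hη : η.length ≤ n)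
    {c c' : C.carrier} {b₁ b₁' : B.carrier}
    (ht : tie0 A B C f g η c b₁) (ht' : tie0 A B C f g η c' b₁')
    (hle : mle B η b₁ b₁') : mle C η c c' ∨ mle C η c' c := by
  by_cases hKeq : Kc A C g η c = Kc A C g η c'
  · obtain ⟨a₃', ha₃'⟩ := ht'.2.2
    have hc'g := (ht'.2.1 a₃').1 ha₃'
    have hcg := (ht.2.1 a₃').1 (mle_trans hh.hB hη hle ha₃')
    exact mle_lin hh.hC hη hcg hc'g
  · have hsub : Kc A C g η c ⊆ Kc A C g η c' := by
      rw [← ht.1, ← ht'.1]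
      intro a₂ h
      exact mle_trans hh.hB hη h hle
    have hex : ∃ a₄, a₄ ∈ Kc A C g η c' ∧ a₄ ∉ Kc A C g η c := by
      by_contra hno
      push_neg at hno
      exact hKeq (Set.Subset.antisymm hsub hno)
    obtain ⟨a₄, h4', h4⟩ := hex
    have h4b : a₄ ∈ Kb A B f η b₁' := by rw [ht'.1]; exact h4'
    rcases mle_lin hh.hB hη h4b hle with h' | h'
    · exfalso
      apply h4
      rw [← ht.1]
      exact h'
    · exact Or.inl (mle_trans hh.hC hη ((ht.2.1 a₄).1 h') h4')

theorem Rle_lin (hh : Good A B C f g) {η : List Bool} (hη : η.length ≤ n)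
    {z z' u : B.carrier ⊕ C.carrier}
    (h1 : Rle A B C f g η z u) (h2 : Rle A B C f g η z' u) :
    Rle A B C f g η z z' ∨ Rle A B C f g η z' z := by
  rcases z with b | c <;> rcases z' with b' | c'
  · -- l l
    rcases u with b₀ | c₀
    · exact mle_lin hh.hB hη h1 h2
    · obtain ⟨a, hbfa, hgac₀⟩ := h1
      obtain ⟨a', hb'fa', hga'c₀⟩ := h2
      rcases mle_lin hh.hC hη hgac₀ hga'c₀ with h' | h'
      · have hle : mle B η (f a) (f a') := (embmle hh.hf hη).2 ((embmle hh.hg hη).1 h')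
        exact mle_lin hh.hB hη (mle_trans hh.hB hη hbfa hle) hb'fa'
      · have hle : mle B η (f a') (f a) := (embmle hh.hf hη).2 ((embmle hh.hg hη).1 h')
        exact mle_lin hh.hB hη hbfa (mle_trans hh.hB hη hb'fa' hle)
  · exact lin_lr hh hη h1 h2
  · exact (lin_lr hh hη h2 h1).symm
  · -- r r
    rcases u with b₀ | c₀
    · rcases h1 with ⟨a, hcga, hfab₀⟩ | ⟨b₁, hb₁b₀, htie⟩ <;>
        rcases h2 with ⟨a', hc'ga', hfa'b₀⟩ | ⟨b₁', hb₁'b₀, htie'⟩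
      · rcases mle_lin hh.hB hη hfab₀ hfa'b₀ with h' | h'
        · have hle : mle C η (g a) (g a') := (embmle hh.hg hη).2 ((embmle hh.hf hη).1 h')
          exact mle_lin hh.hC hη (mle_trans hh.hC hη hcga hle) hc'ga'
        · have hle : mle C η (g a') (g a) := (embmle hh.hg hη).2 ((embmle hh.hf hη).1 h')
          exact mle_lin hh.hC hη hcga (mle_trans hh.hC hη hc'ga' hle)
      · rcases mle_lin hh.hB hη hfab₀ hb₁'b₀ with h' | h'
        · have hmem : a ∈ Kc A C g η c' := by rw [← htie'.1]; exact h'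
          exact Or.inl (mle_trans hh.hC hη hcga hmem)
        · exact mle_lin hh.hC hη hcga ((htie'.2.1 a).1 h')
      · rcases mle_lin hh.hB hη hfa'b₀ hb₁b₀ with h' | h'
        · have hmem : a' ∈ Kc A C g η c := by rw [← htie.1]; exact h'
          exact Or.inr (mle_trans hh.hC hη hc'ga' hmem)
        · exact (mle_lin hh.hC hη hc'ga' ((htie.2.1 a').1 h')).symm
      · rcases mle_lin hh.hB hη hb₁b₀ hb₁'b₀ with h' | h'
        · exact lin_climb2 hh hη htie htie' h'
        · exact (lin_climb2 hh hη htie' htie h').symm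
    · exact mle_lin hh.hC hη h1 h2

end Lin


section MeetSets

variable {A B C : TreeModelN n} {f : A.carrier → B.carrier} {g : A.carrier → C.carrier}

theorem Rle_fg {η : List Bool} (a : A.carrier) :
    Rle A B C f g η (.inl (f a)) (.inr (g a)) :=
  ⟨a, mle_refl B η (f a), mle_refl C η (g a)⟩

theorem Rle_gf {η : List Bool} (a : A.carrier) :
    Rle A B C f g η (.inr (g a)) (.inl (f a)) :=
  Or.inl ⟨a, mle_refl C η (g a), mle_refl B η (f a)⟩

theorem Rle_meetB (hh : Good A B C f g) {η : List Bool} (hη : η.length ≤ n)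
    {b b' : B.carrier} (hPb : B.P η b) (hPb' : B.P η b') {z : B.carrier ⊕ C.carrier} :
    Rle A B C f g η z (.inl (B.meet η b b')) ↔
      Rle A B C f g η z (.inl b) ∧ Rle A B C f g η z (.inl b') := by
  constructor
  · intro h
    exact ⟨Rle_trans hh hη h (meet_mle_l hh.hB hη hPb hPb'),
      Rle_trans hh hη h (meet_mle_r hh.hB hη hPb hPb')⟩
  · rintro ⟨h1, h2⟩
    rcases z with b₂ | c
    · exact mle_meet hh.hB hη hPb hPb' h1 h2
    · rcases h1 with ⟨a, hcga, hfab⟩ | ⟨b₁, hb₁b, htie⟩ <;>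
        rcases h2 with ⟨a', hcga', hfab'⟩ | ⟨b₁', hb₁'b', htie'⟩
      · -- through / through
        have hPa : A.P η a := (embP hh.hf hη).1 (P_of_mle hh.hB hη hfab hPb)
        have hPa' : A.P η a' := (embP hh.hf hη).1 (P_of_mle hh.hB hη hfab' hPb')
        have hcgm : mle C η c (g (A.meet η a a')) := by
          rw [embmeet hh.hg hη]
          exact mle_meet hh.hC hη ((embP hh.hg hη).2 hPa) ((embP hh.hg hη).2 hPa')
            hcga hcga'
        have hfm : mle B η (f (A.meet η a a')) (B.meet η b b') :=
          mle_meet hh.hB hη hPb hPb'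
            (mle_trans hh.hB hη ((embmle hh.hf hη).2 (meet_mle_l hh.hA hη hPa hPa')) hfab)
            (mle_trans hh.hB hη ((embmle hh.hf hη).2 (meet_mle_r hh.hA hη hPa hPa')) hfab')
        exact Or.inl ⟨A.meet η a a', hcgm, hfm⟩
      · -- through / climb
        have h3 : mle B η b₁' (f a) := (htie'.2.1 a).2 hcga
        exact Or.inr ⟨b₁', mle_meet hh.hB hη hPb hPb'
          (mle_trans hh.hB hη h3 hfab) hb₁'b', htie'⟩
      · -- climb / through
        have h3 : mle B η b₁ (f a') := (htie.2.1 a').2 hcga'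
        exact Or.inr ⟨b₁, mle_meet hh.hB hη hPb hPb' hb₁b
          (mle_trans hh.hB hη h3 hfab'), htie⟩
      · -- climb / climb
        obtain ⟨a₃, ha₃⟩ := htie.2.2
        have h3 : mle C η c (g a₃) := (htie.2.1 a₃).1 ha₃
        have h4 : mle B η b₁' (f a₃) := (htie'.2.1 a₃).2 h3
        rcases mle_lin hh.hB hη ha₃ h4 with h' | h'
        · exact Or.inr ⟨b₁, mle_meet hh.hB hη hPb hPb' hb₁b
            (mle_trans hh.hB hη h' hb₁'b'), htie⟩
        · exact Or.inr ⟨b₁', mle_meet hh.hB hη hPb hPb'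
            (mle_trans hh.hB hη h' hb₁b) hb₁'b', htie'⟩

theorem Rle_meetC (hh : Good A B C f g) {η : List Bool} (hη : η.length ≤ n)
    {c c' : C.carrier} (hPc : C.P η c) (hPc' : C.P η c') {z : B.carrier ⊕ C.carrier} :
    Rle A B C f g η z (.inr (C.meet η c c')) ↔
      Rle A B C f g η z (.inr c) ∧ Rle A B C f g η z (.inr c') := by
  constructor
  · intro h
    exact ⟨Rle_trans hh hη h (meet_mle_l hh.hC hη hPc hPc'),
      Rle_trans hh hη h (meet_mle_r hh.hC hη hPc hPc')⟩
  · rintro ⟨h1, h2⟩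
    rcases z with b | c₂
    · obtain ⟨a, hbfa, hgac⟩ := h1
      obtain ⟨a', hbfa', hga'c'⟩ := h2
      have hPa : A.P η a := (embP hh.hg hη).1 (P_of_mle hh.hC hη hgac hPc)
      have hPa' : A.P η a' := (embP hh.hg hη).1 (P_of_mle hh.hC hη hga'c' hPc')
      have hbfm : mle B η b (f (A.meet η a a')) := by
        rw [embmeet hh.hf hη]
        exact mle_meet hh.hB hη ((embP hh.hf hη).2 hPa) ((embP hh.hf hη).2 hPa')
          hbfa hbfa'
      have hgm : mle C η (g (A.meet η a a')) (C.meet η c c') :=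
        mle_meet hh.hC hη hPc hPc'
          (mle_trans hh.hC hη ((embmle hh.hg hη).2 (meet_mle_l hh.hA hη hPa hPa')) hgac)
          (mle_trans hh.hC hη ((embmle hh.hg hη).2 (meet_mle_r hh.hA hη hPa hPa')) hga'c')
      exact ⟨A.meet η a a', hbfm, hgm⟩
    · exact mle_meet hh.hC hη hPc hPc' h1 h2

theorem Rle_antisym_cross (hh : Good A B C f g) {η : List Bool} (hη : η.length ≤ n)
    {b : B.carrier} {c : C.carrier}
    (h1 : Rle A B C f g η (.inl b) (.inr c)) (h2 : Rle A B C f g η (.inr c) (.inl b)) :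
    ∃ a, b = f a ∧ c = g a := by
  obtain ⟨a, hbfa, hgac⟩ := h1
  rcases h2 with ⟨a', hcga', hfa'b⟩ | ⟨b₁, hb₁b, htie⟩
  · have haa' : mle A η a a' := (embmle hh.hg hη).1 (mle_trans hh.hC hη hgac hcga')
    have h3 : mle B η (f a) b := mle_trans hh.hB hη ((embmle hh.hf hη).2 haa') hfa'b
    have hbeq : b = f a := mle_antisymm hh.hB hη hbfa h3
    have ha'a : mle A η a' a := (embmle hh.hf hη).1 (hbeq ▸ hfa'b)
    have hcga : mle C η c (g a) := mle_trans hh.hC hη hcga' ((embmle hh.hg hη).2 ha'a)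
    exact ⟨a, hbeq, mle_antisymm hh.hC hη hcga hgac⟩
  · have hfa_b₁ : mle B η (f a) b₁ := by
      have hmem : a ∈ Kc A C g η c := hgac
      rw [← htie.1] at hmem
      exact hmem
    have hbeq : b = f a := mle_antisymm hh.hB hη hbfa (mle_trans hh.hB hη hfa_b₁ hb₁b)
    have hb₁eq : b₁ = f a := mle_antisymm hh.hB hη (hbeq ▸ hb₁b) hfa_b₁
    have hcga : mle C η c (g a) := (htie.2.1 a).1 (Or.inr hb₁eq)
    exact ⟨a, hbeq, mle_antisymm hh.hC hη hcga hgac⟩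

end MeetSets


section Construction

open scoped Classical

variable (A B C : TreeModelN n) (f : A.carrier → B.carrier) (g : A.carrier → C.carrier)

def sset (η : List Bool) (u : B.carrier ⊕ C.carrier) : Set (B.carrier ⊕ C.carrier) :=
  {z | Rle A B C f g η z u}

def chainDC (η : List Bool) (S : Set (B.carrier ⊕ C.carrier)) : Prop :=
  (∀ z ∈ S, ∀ z' ∈ S, Rle A B C f g η z z' ∨ Rle A B C f g η z' z) ∧
    ∀ z ∈ S, ∀ z', Rle A B C f g η z' z → z' ∈ S

abbrev DCar := (List Bool × Set (B.carrier ⊕ C.carrier)) ⊕ (B.carrier ⊕ C.carrier)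

def DP (η : List Bool) : DCar B C → Prop
  | .inl p => p.1 = η ∧ chainDC A B C f g η p.2
  | .inr _ => False

def Dlt (η : List Bool) (x y : DCar B C) : Prop :=
  DP A B C f g η x ∧ DP A B C f g η y ∧
    match x, y with
    | .inl p, .inl q => p.2 ⊂ q.2
    | _, _ => False

noncomputable def embB (b : B.carrier) : DCar B C :=
  if h : ∃ η', η'.length ≤ n ∧ B.P η' b then
    .inl (h.choose, sset A B C f g h.choose (.inl b))
  else .inr (.inl b)

noncomputable def embC (c : C.carrier) : DCar B C :=
  if h : ∃ η', η'.length ≤ n ∧ C.P η' c then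
    .inl (h.choose, sset A B C f g h.choose (.inr c))
  else if hr : ∃ a, g a = c then .inr (.inl (f hr.choose))
  else .inr (.inr c)

noncomputable def dmeet (η : List Bool) (x y : DCar B C) : DCar B C :=
  if hx : DP A B C f g η x then
    if hy : DP A B C f g η y then
      match x, y with
      | .inl p, .inl q => .inl (η, p.2 ∩ q.2)
      | _, _ => x
    else if hb : (∃ b, embB A B C f g b = x) ∧ (∃ b', embB A B C f g b' = y) then
      embB A B C f g (B.meet η hb.1.choose hb.2.choose)
    else if hc : (∃ c, embC A B C f g c = x) ∧ (∃ c', embC A B C f g c' = y) then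
      embC A B C f g (C.meet η hc.1.choose hc.2.choose)
    else x
  else x

noncomputable def dG (η : List Bool) (i : Bool) (x : DCar B C) : DCar B C :=
  if hx : ∃ b, embB A B C f g b = x then embB A B C f g (B.G η i hx.choose)
  else if hx' : ∃ c, embC A B C f g c = x then embC A B C f g (C.G η i hx'.choose)
  else if DP A B C f g η x then .inl (η ++ [i], (∅ : Set (B.carrier ⊕ C.carrier)))
  else x

noncomputable def DD : TreeModelN n where
  carrier := DCar B C
  P := fun η x => DP A B C f g η x
  lt := fun η x y => Dlt A B C f g η x y
  meet := fun η x y => dmeet A B C f g η x y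
  G := fun η i x => dG A B C f g η i x

variable {A B C f g}

theorem chainDC_sset (hh : Good A B C f g) {η : List Bool} (hη : η.length ≤ n)
    (u : B.carrier ⊕ C.carrier) : chainDC A B C f g η (sset A B C f g η u) :=
  ⟨fun _ hz _ hz' => Rle_lin hh hη hz hz', fun _ hz _ h => Rle_trans hh hη h hz⟩

theorem chainDC_inter {η : List Bool} {S S' : Set (B.carrier ⊕ C.carrier)}
    (h1 : chainDC A B C f g η S) (h2 : chainDC A B C f g η S') :
    chainDC A B C f g η (S ∩ S') :=
  ⟨fun z hz z' hz' => h1.1 z hz.1 z' hz'.1,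
   fun z hz z' h => ⟨h1.2 z hz.1 z' h, h2.2 z hz.2 z' h⟩⟩

theorem chainDC_empty {η : List Bool} :
    chainDC A B C f g η (∅ : Set (B.carrier ⊕ C.carrier)) :=
  ⟨fun _ hz => hz.elim, fun _ hz => hz.elim⟩

theorem mem_sset {η : List Bool} {u z : B.carrier ⊕ C.carrier} :
    z ∈ sset A B C f g η u ↔ Rle A B C f g η z u := Iff.rfl

theorem embB_eq (hB : IsModelN n B) {η : List Bool} (hη : η.length ≤ n) {b : B.carrier}
    (hPb : B.P η b) : embB A B C f g b = .inl (η, sset A B C f g η (.inl b)) := by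
  have hex : ∃ η', η'.length ≤ n ∧ B.P η' b := ⟨η, hη, hPb⟩
  unfold embB
  rw [dif_pos hex]
  have htag : hex.choose = η := by
    by_contra hne
    exact hB.disj hex.choose η hex.choose_spec.1 hη hne b hex.choose_spec.2 hPb
  rw [htag]

theorem embC_eq (hC : IsModelN n C) {η : List Bool} (hη : η.length ≤ n) {c : C.carrier}
    (hPc : C.P η c) : embC A B C f g c = .inl (η, sset A B C f g η (.inr c)) := by
  have hex : ∃ η', η'.length ≤ n ∧ C.P η' c := ⟨η, hη, hPc⟩
  unfold embC
  rw [dif_pos hex]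
  have htag : hex.choose = η := by
    by_contra hne
    exact hC.disj hex.choose η hex.choose_spec.1 hη hne c hex.choose_spec.2 hPc
  rw [htag]

theorem embB_P (hh : Good A B C f g) {η : List Bool} (hη : η.length ≤ n) {b : B.carrier} :
    DP A B C f g η (embB A B C f g b) ↔ B.P η b := by
  constructor
  · intro h
    by_cases hex : ∃ η', η'.length ≤ n ∧ B.P η' b
    · unfold embB at h
      rw [dif_pos hex] at h
      have htag : hex.choose = η := h.1
      have hspec := hex.choose_spec.2
      rwa [htag] at hspec
    · unfold embB at h
      rw [dif_neg hex] at h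
      exact h.elim
  · intro hPb
    rw [embB_eq hh.hB hη hPb]
    exact ⟨rfl, chainDC_sset hh hη _⟩

theorem embC_P (hh : Good A B C f g) {η : List Bool} (hη : η.length ≤ n) {c : C.carrier} :
    DP A B C f g η (embC A B C f g c) ↔ C.P η c := by
  constructor
  · intro h
    by_cases hex : ∃ η', η'.length ≤ n ∧ C.P η' c
    · unfold embC at h
      rw [dif_pos hex] at h
      have htag : hex.choose = η := h.1
      have hspec := hex.choose_spec.2
      rwa [htag] at hspec
    · unfold embC at h
      rw [dif_neg hex] at h
      by_cases hr : ∃ a, g a = c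
      · rw [dif_pos hr] at h; exact h.elim
      · rw [dif_neg hr] at h; exact h.elim
  · intro hPc
    rw [embC_eq hh.hC hη hPc]
    exact ⟨rfl, chainDC_sset hh hη _⟩

theorem embB_inj (hh : Good A B C f g) : Function.Injective (embB A B C f g) := by
  intro b b' h
  by_cases h1 : ∃ η', η'.length ≤ n ∧ B.P η' b <;>
    by_cases h2 : ∃ η', η'.length ≤ n ∧ B.P η' b'
  · unfold embB at h
    rw [dif_pos h1, dif_pos h2] at h
    injection h with h
    have htag : h1.choose = h2.choose := congrArg Prod.fst h
    have hset : sset A B C f g h1.choose (Sum.inl b)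
        = sset A B C f g h2.choose (Sum.inl b') := congrArg Prod.snd h
    rw [← htag] at hset
    have hη := h1.choose_spec.1
    have hm1 : Rle A B C f g h1.choose (.inl b) (.inl b') := by
      have : (Sum.inl b : B.carrier ⊕ C.carrier) ∈ sset A B C f g h1.choose (.inl b) :=
        mem_sset.2 (Rle_refl _)
      rw [hset] at this
      exact mem_sset.1 this
    have hm2 : Rle A B C f g h1.choose (.inl b') (.inl b) := by
      have : (Sum.inl b' : B.carrier ⊕ C.carrier) ∈ sset A B C f g h1.choose (.inl b') :=
        mem_sset.2 (Rle_refl _)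
      rw [← hset] at this
      exact mem_sset.1 this
    exact mle_antisymm hh.hB hη hm1 hm2
  · unfold embB at h; rw [dif_pos h1, dif_neg h2] at h; exact (nomatch h)
  · unfold embB at h; rw [dif_neg h1, dif_pos h2] at h; exact (nomatch h)
  · unfold embB at h
    rw [dif_neg h1, dif_neg h2] at h
    injection h with h
    injection h

theorem embC_inj (hh : Good A B C f g) : Function.Injective (embC A B C f g) := by
  intro c c' h
  by_cases h1 : ∃ η', η'.length ≤ n ∧ C.P η' c <;>
    by_cases h2 : ∃ η', η'.length ≤ n ∧ C.P η' c'
  · unfold embC at h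
    rw [dif_pos h1, dif_pos h2] at h
    injection h with h
    have htag : h1.choose = h2.choose := congrArg Prod.fst h
    have hset : sset A B C f g h1.choose (Sum.inr c)
        = sset A B C f g h2.choose (Sum.inr c') := congrArg Prod.snd h
    rw [← htag] at hset
    have hη := h1.choose_spec.1
    have hm1 : Rle A B C f g h1.choose (.inr c) (.inr c') := by
      have : (Sum.inr c : B.carrier ⊕ C.carrier) ∈ sset A B C f g h1.choose (.inr c) :=
        mem_sset.2 (Rle_refl _)
      rw [hset] at this
      exact mem_sset.1 this
    have hm2 : Rle A B C f g h1.choose (.inr c') (.inr c) := by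
      have : (Sum.inr c' : B.carrier ⊕ C.carrier) ∈ sset A B C f g h1.choose (.inr c') :=
        mem_sset.2 (Rle_refl _)
      rw [← hset] at this
      exact mem_sset.1 this
    exact mle_antisymm hh.hC hη hm1 hm2
  · unfold embC at h
    rw [dif_pos h1, dif_neg h2] at h
    by_cases hr : ∃ a, g a = c'
    · rw [dif_pos hr] at h; exact (nomatch h)
    · rw [dif_neg hr] at h; exact (nomatch h)
  · unfold embC at h
    rw [dif_neg h1, dif_pos h2] at h
    by_cases hr : ∃ a, g a = c
    · rw [dif_pos hr] at h; exact (nomatch h)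
    · rw [dif_neg hr] at h; exact (nomatch h)
  · unfold embC at h
    rw [dif_neg h1, dif_neg h2] at h
    by_cases hr : ∃ a, g a = c <;> by_cases hr' : ∃ a, g a = c'
    · rw [dif_pos hr, dif_pos hr'] at h
      injection h with h
      injection h with h
      have : hr.choose = hr'.choose := hh.hf.1 h
      rw [← hr.choose_spec, ← hr'.choose_spec, this]
    · rw [dif_pos hr, dif_neg hr'] at h
      injection h with h
      exact (nomatch h)
    · rw [dif_neg hr, dif_pos hr'] at h
      injection h with h
      exact (nomatch h)
    · rw [dif_neg hr, dif_neg hr'] at h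
      injection h with h
      injection h

theorem compat (hh : Good A B C f g) (a : A.carrier) :
    embB A B C f g (f a) = embC A B C f g (g a) := by
  by_cases hex : ∃ η', η'.length ≤ n ∧ A.P η' a
  · obtain ⟨η', hη', hPa⟩ := hex
    have hPb : B.P η' (f a) := (embP hh.hf hη').2 hPa
    have hPc : C.P η' (g a) := (embP hh.hg hη').2 hPa
    rw [embB_eq hh.hB hη' hPb, embC_eq hh.hC hη' hPc]
    have hset : sset A B C f g η' (.inl (f a)) = sset A B C f g η' (.inr (g a)) := by
      ext z
      exact ⟨fun hz => Rle_trans hh hη' hz (Rle_fg a),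
        fun hz => Rle_trans hh hη' hz (Rle_gf a)⟩
    rw [hset]
  · have hexB : ¬ ∃ η', η'.length ≤ n ∧ B.P η' (f a) := by
      rintro ⟨η', hl, hP⟩
      exact hex ⟨η', hl, (embP hh.hf hl).1 hP⟩
    have hexC : ¬ ∃ η', η'.length ≤ n ∧ C.P η' (g a) := by
      rintro ⟨η', hl, hP⟩
      exact hex ⟨η', hl, (embP hh.hg hl).1 hP⟩
    have hr : ∃ a', g a' = g a := ⟨a, rfl⟩
    unfold embB embC
    rw [dif_neg hexB, dif_neg hexC, dif_pos hr]
    have : hr.choose = a := hh.hg.1 hr.choose_spec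
    rw [this]

theorem P6 (hh : Good A B C f g) {b : B.carrier} {c : C.carrier}
    (h : embB A B C f g b = embC A B C f g c) : ∃ a, b = f a ∧ c = g a := by
  by_cases h1 : ∃ η', η'.length ≤ n ∧ B.P η' b <;>
    by_cases h2 : ∃ η', η'.length ≤ n ∧ C.P η' c
  · unfold embB embC at h
    rw [dif_pos h1, dif_pos h2] at h
    injection h with h
    have htag : h1.choose = h2.choose := congrArg Prod.fst h
    have hset : sset A B C f g h1.choose (Sum.inl b)
        = sset A B C f g h2.choose (Sum.inr c) := congrArg Prod.snd h
    rw [← htag] at hset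
    have hη := h1.choose_spec.1
    have hm1 : Rle A B C f g h1.choose (.inl b) (.inr c) := by
      have : (Sum.inl b : B.carrier ⊕ C.carrier) ∈ sset A B C f g h1.choose (.inl b) :=
        mem_sset.2 (Rle_refl _)
      rw [hset] at this
      exact mem_sset.1 this
    have hm2 : Rle A B C f g h1.choose (.inr c) (.inl b) := by
      have : (Sum.inr c : B.carrier ⊕ C.carrier) ∈ sset A B C f g h1.choose (.inr c) :=
        mem_sset.2 (Rle_refl _)
      rw [← hset] at this
      exact mem_sset.1 this
    exact Rle_antisym_cross hh hη hm1 hm2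
  · unfold embB embC at h
    rw [dif_pos h1, dif_neg h2] at h
    by_cases hr : ∃ a, g a = c
    · rw [dif_pos hr] at h; exact (nomatch h)
    · rw [dif_neg hr] at h; exact (nomatch h)
  · unfold embB embC at h
    rw [dif_neg h1, dif_pos h2] at h
    exact (nomatch h)
  · unfold embB embC at h
    rw [dif_neg h1, dif_neg h2] at h
    by_cases hr : ∃ a, g a = c
    · rw [dif_pos hr] at h
      injection h with h
      injection h with h
      exact ⟨hr.choose, h, hr.choose_spec.symm⟩
    · rw [dif_neg hr] at h
      injection h with h
      exact (nomatch h)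

end Construction


section Verification

variable {A B C : TreeModelN n} {f : A.carrier → B.carrier} {g : A.carrier → C.carrier}

theorem dmeet_PP {η : List Bool} {p q : List Bool × Set (B.carrier ⊕ C.carrier)}
    (hx : DP A B C f g η (.inl p)) (hy : DP A B C f g η (.inl q)) :
    dmeet A B C f g η (.inl p) (.inl q) = .inl (η, p.2 ∩ q.2) := by
  unfold dmeet
  rw [dif_pos hx, dif_pos hy]

theorem dmeet_nP {η : List Bool} {x y : DCar B C} (hx : ¬ DP A B C f g η x) :
    dmeet A B C f g η x y = x := by
  unfold dmeet
  rw [dif_neg hx]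

theorem dmeet_patchB {η : List Bool} {x y : DCar B C} (hx : DP A B C f g η x)
    (hy : ¬ DP A B C f g η y)
    (hb : (∃ b, embB A B C f g b = x) ∧ (∃ b', embB A B C f g b' = y)) :
    dmeet A B C f g η x y = embB A B C f g (B.meet η hb.1.choose hb.2.choose) := by
  unfold dmeet
  rw [dif_pos hx, dif_neg hy, dif_pos hb]

theorem dmeet_patchC {η : List Bool} {x y : DCar B C} (hx : DP A B C f g η x)
    (hy : ¬ DP A B C f g η y)
    (hnb : ¬ ((∃ b, embB A B C f g b = x) ∧ (∃ b', embB A B C f g b' = y)))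
    (hc : (∃ c, embC A B C f g c = x) ∧ (∃ c', embC A B C f g c' = y)) :
    dmeet A B C f g η x y = embC A B C f g (C.meet η hc.1.choose hc.2.choose) := by
  unfold dmeet
  rw [dif_pos hx, dif_neg hy, dif_neg hnb, dif_pos hc]

theorem dmeet_embB (hh : Good A B C f g) {η : List Bool} (hη : η.length ≤ n)
    (b b' : B.carrier) :
    dmeet A B C f g η (embB A B C f g b) (embB A B C f g b')
      = embB A B C f g (B.meet η b b') := by
  by_cases hPb : B.P η b
  · by_cases hPb' : B.P η b'
    · have hm : B.P η (B.meet η b b') := hh.hB.meet_mem η hη b b' hPb hPb'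
      have hset : sset A B C f g η (.inl (B.meet η b b'))
          = sset A B C f g η (.inl b) ∩ sset A B C f g η (.inl b') := by
        ext z
        rw [mem_sset, Set.mem_inter_iff, mem_sset, mem_sset]
        exact Rle_meetB hh hη hPb hPb'
      rw [embB_eq hh.hB hη hPb, embB_eq hh.hB hη hPb', embB_eq hh.hB hη hm, hset]
      exact dmeet_PP ⟨rfl, chainDC_sset hh hη _⟩ ⟨rfl, chainDC_sset hh hη _⟩
    · have hx : DP A B C f g η (embB A B C f g b) := (embB_P hh hη).2 hPb
      have hy : ¬ DP A B C f g η (embB A B C f g b') :=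
        fun h => hPb' ((embB_P hh hη).1 h)
      have hb2 : (∃ b₂, embB A B C f g b₂ = embB A B C f g b) ∧
          (∃ b₂', embB A B C f g b₂' = embB A B C f g b') := ⟨⟨b, rfl⟩, ⟨b', rfl⟩⟩
      rw [dmeet_patchB hx hy hb2, embB_inj hh hb2.1.choose_spec,
        embB_inj hh hb2.2.choose_spec]
  · have hx : ¬ DP A B C f g η (embB A B C f g b) := fun h => hPb ((embB_P hh hη).1 h)
    rw [dmeet_nP hx, hh.hB.meet_id η hη b b' hPb]

theorem dmeet_embC (hh : Good A B C f g) {η : List Bool} (hη : η.length ≤ n)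
    (c c' : C.carrier) :
    dmeet A B C f g η (embC A B C f g c) (embC A B C f g c')
      = embC A B C f g (C.meet η c c') := by
  by_cases hPc : C.P η c
  · by_cases hPc' : C.P η c'
    · have hm : C.P η (C.meet η c c') := hh.hC.meet_mem η hη c c' hPc hPc'
      have hset : sset A B C f g η (.inr (C.meet η c c'))
          = sset A B C f g η (.inr c) ∩ sset A B C f g η (.inr c') := by
        ext z
        rw [mem_sset, Set.mem_inter_iff, mem_sset, mem_sset]
        exact Rle_meetC hh hη hPc hPc'
      rw [embC_eq hh.hC hη hPc, embC_eq hh.hC hη hPc', embC_eq hh.hC hη hm, hset]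
      exact dmeet_PP ⟨rfl, chainDC_sset hh hη _⟩ ⟨rfl, chainDC_sset hh hη _⟩
    · have hx : DP A B C f g η (embC A B C f g c) := (embC_P hh hη).2 hPc
      have hy : ¬ DP A B C f g η (embC A B C f g c') :=
        fun h => hPc' ((embC_P hh hη).1 h)
      by_cases hb2 : (∃ b₂, embB A B C f g b₂ = embC A B C f g c) ∧
          (∃ b₂', embB A B C f g b₂' = embC A B C f g c')
      · rw [dmeet_patchB hx hy hb2]
        obtain ⟨a, hba, hca⟩ := P6 hh hb2.1.choose_spec
        obtain ⟨a', hba', hca'⟩ := P6 hh hb2.2.choose_spec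
        rw [hba, hba', ← embmeet hh.hf hη, compat hh, embmeet hh.hg hη, ← hca, ← hca']
      · have hc2 : (∃ c₂, embC A B C f g c₂ = embC A B C f g c) ∧
            (∃ c₂', embC A B C f g c₂' = embC A B C f g c') := ⟨⟨c, rfl⟩, ⟨c', rfl⟩⟩
        rw [dmeet_patchC hx hy hb2 hc2, embC_inj hh hc2.1.choose_spec,
          embC_inj hh hc2.2.choose_spec]
  · have hx : ¬ DP A B C f g η (embC A B C f g c) := fun h => hPc ((embC_P hh hη).1 h)
    rw [dmeet_nP hx, hh.hC.meet_id η hη c c' hPc]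

theorem embB_lt (hh : Good A B C f g) {η : List Bool} (hη : η.length ≤ n)
    {b b' : B.carrier} :
    Dlt A B C f g η (embB A B C f g b) (embB A B C f g b') ↔ B.lt η b b' := by
  constructor
  · rintro ⟨h1, h2, h3⟩
    have hPb := (embB_P hh hη).1 h1
    have hPb' := (embB_P hh hη).1 h2
    rw [embB_eq hh.hB hη hPb, embB_eq hh.hB hη hPb'] at h3
    have h4 : sset A B C f g η (.inl b) ⊂ sset A B C f g η (.inl b') := h3
    have hm : mle B η b b' := mem_sset.1 (h4.1 (mem_sset.2 (Rle_refl _)))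
    rcases hm with hlt | heq
    · exact hlt
    · exfalso
      subst heq
      rw [Set.ssubset_iff_subset_ne] at h4
      exact h4.2 rfl
  · intro hlt
    have hPb := P_of_lt_l hh.hB hη hlt
    have hPb' := P_of_lt_r hh.hB hη hlt
    refine ⟨(embB_P hh hη).2 hPb, (embB_P hh hη).2 hPb', ?_⟩
    rw [embB_eq hh.hB hη hPb, embB_eq hh.hB hη hPb']
    show sset A B C f g η (.inl b) ⊂ sset A B C f g η (.inl b')
    rw [Set.ssubset_def]
    constructor
    · intro z hz
      exact mem_sset.2 (Rle_trans hh hη (mem_sset.1 hz) (Or.inl hlt))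
    · intro hsub
      have hm : mle B η b' b := mem_sset.1 (hsub (mem_sset.2 (Rle_refl _)))
      have heq := mle_antisymm hh.hB hη hm (Or.inl hlt)
      rw [heq] at hlt
      exact hh.hB.lt_irrefl η hη b hlt
  
theorem embC_lt (hh : Good A B C f g) {η : List Bool} (hη : η.length ≤ n)
    {c c' : C.carrier} :
    Dlt A B C f g η (embC A B C f g c) (embC A B C f g c') ↔ C.lt η c c' := by
  constructor
  · rintro ⟨h1, h2, h3⟩
    have hPc := (embC_P hh hη).1 h1
    have hPc' := (embC_P hh hη).1 h2
    rw [embC_eq hh.hC hη hPc, embC_eq hh.hC hη hPc'] at h3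
    have h4 : sset A B C f g η (.inr c) ⊂ sset A B C f g η (.inr c') := h3
    have hm : mle C η c c' := mem_sset.1 (h4.1 (mem_sset.2 (Rle_refl _)))
    rcases hm with hlt | heq
    · exact hlt
    · exfalso
      subst heq
      rw [Set.ssubset_iff_subset_ne] at h4
      exact h4.2 rfl
  · intro hlt
    have hPc := P_of_lt_l hh.hC hη hlt
    have hPc' := P_of_lt_r hh.hC hη hlt
    refine ⟨(embC_P hh hη).2 hPc, (embC_P hh hη).2 hPc', ?_⟩
    rw [embC_eq hh.hC hη hPc, embC_eq hh.hC hη hPc']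
    show sset A B C f g η (.inr c) ⊂ sset A B C f g η (.inr c')
    rw [Set.ssubset_def]
    constructor
    · intro z hz
      exact mem_sset.2 (Rle_trans hh hη (mem_sset.1 hz) (Or.inl hlt))
    · intro hsub
      have hm : mle C η c' c := mem_sset.1 (hsub (mem_sset.2 (Rle_refl _)))
      have heq := mle_antisymm hh.hC hη hm (Or.inl hlt)
      rw [heq] at hlt
      exact hh.hC.lt_irrefl η hη c hlt

theorem dG_embB (hh : Good A B C f g) {η : List Bool} {i : Bool} {b : B.carrier} :
    dG A B C f g η i (embB A B C f g b) = embB A B C f g (B.G η i b) := by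
  have hx : ∃ b₂, embB A B C f g b₂ = embB A B C f g b := ⟨b, rfl⟩
  unfold dG
  rw [dif_pos hx, embB_inj hh hx.choose_spec]

theorem dG_embC (hh : Good A B C f g) {η : List Bool} (hη' : η.length < n) {i : Bool}
    {c : C.carrier} :
    dG A B C f g η i (embC A B C f g c) = embC A B C f g (C.G η i c) := by
  by_cases hbx : ∃ b₂, embB A B C f g b₂ = embC A B C f g c
  · unfold dG
    rw [dif_pos hbx]
    obtain ⟨a, hba, hca⟩ := P6 hh hbx.choose_spec
    rw [hba, ← embG hh.hf hη', compat hh, embG hh.hg hη', ← hca]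
  · have hcx : ∃ c₂, embC A B C f g c₂ = embC A B C f g c := ⟨c, rfl⟩
    unfold dG
    rw [dif_neg hbx, dif_pos hcx, embC_inj hh hcx.choose_spec]

theorem DD_model (hh : Good A B C f g) : IsModelN n (DD A B C f g) := by
  constructor
  · -- disj
    intro η ν _ _ hne x hx hx2
    rcases x with p | v
    · exact hne (hx.1.symm.trans hx2.1)
    · exact hx.elim
  · -- lt_mem
    intro η _ x y h
    exact ⟨h.1, h.2.1⟩
  · -- lt_irrefl
    intro η _ x h
    rcases x with p | v
    · have h3 : p.2 ⊂ p.2 := h.2.2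
      rw [Set.ssubset_iff_subset_ne] at h3
      exact h3.2 rfl
    · exact h.2.2
  · -- lt_trans
    intro η _ x y z h1 h2
    rcases x with p | v
    · rcases y with q | w
      · rcases z with r | u
        · exact ⟨h1.1, h2.2.1, h1.2.2.trans h2.2.2⟩
        · exact h2.2.2.elim
      · exact h1.2.2.elim
    · exact h1.2.2.elim
  · -- pred_linear
    intro η _ x hx y z h1 h2
    rcases x with p | v
    swap
    · exact hx.elim
    rcases y with q | w
    swap
    · exact h1.2.2.elim
    rcases z with r | u
    swap
    · exact h2.2.2.elim
    have hq : q.2 ⊂ p.2 := h1.2.2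
    have hr : r.2 ⊂ p.2 := h2.2.2
    by_cases hqr : q.2 ⊆ r.2
    · by_cases heq : q.2 = r.2
      · right; right
        have ht : q.1 = r.1 := (h1.1.1).trans (h2.1.1).symm
        exact congrArg Sum.inl (Prod.ext ht heq)
      · exact Or.inl ⟨h1.1, h2.1, Set.ssubset_iff_subset_ne.2 ⟨hqr, heq⟩⟩
    · right; left
      have hsub : r.2 ⊆ q.2 := by
        intro w' hw'
        by_contra hner
        obtain ⟨w0, hw0q, hw0r⟩ := Set.not_subset.1 hqr
        have hw0p : w0 ∈ p.2 := hq.1 hw0q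
        have hw'p : w' ∈ p.2 := hr.1 hw'
        rcases hx.2.1 w0 hw0p w' hw'p with hle | hle
        · exact hw0r (h2.1.2.2 w' hw' w0 hle)
        · exact hner (h1.1.2.2 w0 hw0q w' hle)
      refine ⟨h2.1, h1.1, Set.ssubset_iff_subset_ne.2 ⟨hsub, ?_⟩⟩
      intro he
      exact hqr he.symm.subset
  · -- meet_mem
    intro η hη x y hx hy
    rcases x with p | v
    swap
    · exact hx.elim
    rcases y with q | w
    swap
    · exact hy.elim
    show DP A B C f g η (dmeet A B C f g η (.inl p) (.inl q))
    rw [dmeet_PP hx hy]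
    exact ⟨rfl, chainDC_inter hx.2 hy.2⟩
  · -- meet_le_left
    intro η hη x y hx hy
    rcases x with ⟨ν, S⟩ | v
    swap
    · exact hx.elim
    rcases y with ⟨ν', S'⟩ | w
    swap
    · exact hy.elim
    have hν : ν = η := hx.1
    subst hν
    show Dlt A B C f g ν (dmeet A B C f g ν (.inl (ν, S)) (.inl (ν', S'))) (.inl (ν, S)) ∨
      dmeet A B C f g ν (.inl (ν, S)) (.inl (ν', S')) = .inl (ν, S)
    rw [dmeet_PP hx hy]
    by_cases heq : S ∩ S' = S
    · right
      rw [heq]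
    · left
      exact ⟨⟨rfl, chainDC_inter hx.2 hy.2⟩, hx,
        Set.ssubset_iff_subset_ne.2 ⟨Set.inter_subset_left, heq⟩⟩
  · -- meet_le_right
    intro η hη x y hx hy
    rcases x with ⟨ν, S⟩ | v
    swap
    · exact hx.elim
    rcases y with ⟨ν', S'⟩ | w
    swap
    · exact hy.elim
    have hν : ν' = η := hy.1
    subst hν
    show Dlt A B C f g ν' (dmeet A B C f g ν' (.inl (ν, S)) (.inl (ν', S'))) (.inl (ν', S')) ∨
      dmeet A B C f g ν' (.inl (ν, S)) (.inl (ν', S')) = .inl (ν', S')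
    rw [dmeet_PP hx hy]
    by_cases heq : S ∩ S' = S'
    · right
      rw [heq]
    · left
      exact ⟨⟨rfl, chainDC_inter hx.2 hy.2⟩, hy,
        Set.ssubset_iff_subset_ne.2 ⟨Set.inter_subset_right, heq⟩⟩
  · -- meet_glb
    intro η hη x y z hx hy hz h1 h2
    rcases x with ⟨ν, S⟩ | v
    swap
    · exact hx.elim
    rcases y with ⟨ν', S'⟩ | w
    swap
    · exact hy.elim
    rcases z with ⟨κ, T⟩ | u
    swap
    · exact hz.elim
    have hTS : T ⊆ S := by
      rcases h1 with h | h
      · exact h.2.2.subset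
      · injection h with h
        exact (congrArg Prod.snd h).subset
    have hTS' : T ⊆ S' := by
      rcases h2 with h | h
      · exact h.2.2.subset
      · injection h with h
        exact (congrArg Prod.snd h).subset
    show Dlt A B C f g η (.inl (κ, T)) (dmeet A B C f g η (.inl (ν, S)) (.inl (ν', S'))) ∨
      (.inl (κ, T) : DCar B C) = dmeet A B C f g η (.inl (ν, S)) (.inl (ν', S'))
    rw [dmeet_PP hx hy]
    by_cases heq : T = S ∩ S'
    · right
      have hκ : κ = η := hz.1
      subst hκ
      rw [heq]
    · left
      exact ⟨hz, ⟨rfl, chainDC_inter hx.2 hy.2⟩,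
        Set.ssubset_iff_subset_ne.2 ⟨Set.subset_inter hTS hTS', heq⟩⟩
  · -- meet_id
    intro η hη x y hx
    exact dmeet_nP hx
  · -- G_mem
    intro η hη' i x hx
    have hη : η.length ≤ n := le_of_lt hη'
    have hlen : (η ++ [i]).length ≤ n := by
      simpa using hη'
    by_cases h1 : ∃ b, embB A B C f g b = x
    · obtain ⟨b, rfl⟩ := h1
      show DP A B C f g (η ++ [i]) (dG A B C f g η i (embB A B C f g b))
      rw [dG_embB hh]
      exact (embB_P hh hlen).2 (hh.hB.G_mem η hη' i b ((embB_P hh hη).1 hx))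
    · by_cases h2 : ∃ c, embC A B C f g c = x
      · obtain ⟨c, rfl⟩ := h2
        show DP A B C f g (η ++ [i]) (dG A B C f g η i (embC A B C f g c))
        rw [dG_embC hh hη']
        exact (embC_P hh hlen).2 (hh.hC.G_mem η hη' i c ((embC_P hh hη).1 hx))
      · show DP A B C f g (η ++ [i]) (dG A B C f g η i x)
        have hx' : DP A B C f g η x := hx
        unfold dG
        simp only [dif_neg h1, dif_neg h2, hx', ↓reduceIte]
        exact ⟨rfl, chainDC_empty⟩
  · -- G_id
    intro η hη' i x hx
    have hη : η.length ≤ n := le_of_lt hη'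
    by_cases h1 : ∃ b, embB A B C f g b = x
    · obtain ⟨b, rfl⟩ := h1
      show dG A B C f g η i (embB A B C f g b) = embB A B C f g b
      rw [dG_embB hh, hh.hB.G_id η hη' i b (fun h => hx ((embB_P hh hη).2 h))]
    · by_cases h2 : ∃ c, embC A B C f g c = x
      · obtain ⟨c, rfl⟩ := h2
        show dG A B C f g η i (embC A B C f g c) = embC A B C f g c
        rw [dG_embC hh hη', hh.hC.G_id η hη' i c (fun h => hx ((embC_P hh hη).2 h))]
      · show dG A B C f g η i x = x
        have hx' : ¬ DP A B C f g η x := hx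
        unfold dG
        simp only [dif_neg h1, dif_neg h2, hx', ↓reduceIte, h1, h2, ↓reduceDIte]
        rfl

theorem embB_emb (hh : Good A B C f g) : IsEmbN n B (DD A B C f g) (embB A B C f g) :=
  ⟨embB_inj hh,
   fun _ hη _ => embB_P hh hη,
   fun _ hη _ _ => embB_lt hh hη,
   fun _ hη x y => (dmeet_embB hh hη x y).symm,
   fun _ _ _ _ => (dG_embB hh).symm⟩

theorem embC_emb (hh : Good A B C f g) : IsEmbN n C (DD A B C f g) (embC A B C f g) :=
  ⟨embC_inj hh,
   fun _ hη _ => embC_P hh hη,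
   fun _ hη _ _ => embC_lt hh hη,
   fun _ hη x y => (dmeet_embC hh hη x y).symm,
   fun _ hη' _ _ => (dG_embC hh hη').symm⟩

theorem APmain (A B C : TreeModelN n) (hA : IsModelN n A) (hB : IsModelN n B)
    (hC : IsModelN n C) (f : A.carrier → B.carrier) (g : A.carrier → C.carrier)
    (hf : IsEmbN n A B f) (hg : IsEmbN n A C g) :
    ∃ D : TreeModelN n, IsModelN n D ∧
      ∃ (f' : B.carrier → D.carrier) (g' : C.carrier → D.carrier),
        IsEmbN n B D f' ∧ IsEmbN n C D g' ∧ f' ∘ f = g' ∘ g := by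
  have hh : Good A B C f g := ⟨hA, hB, hC, hf, hg⟩
  exact ⟨DD A B C f g, DD_model hh, embB A B C f g, embC A B C f g, embB_emb hh,
    embC_emb hh, funext fun a => compat hh a⟩

def emptyModel (n : ℕ) : TreeModelN n where
  carrier := PEmpty
  P := fun _ _ => False
  lt := fun _ _ _ => False
  meet := fun _ x _ => x
  G := fun _ _ x => x

theorem emptyModel_isModel : IsModelN n (emptyModel n) := by
  constructor
  · intro η ν _ _ _ x hx
    exact hx.elim
  · intro η _ x y h
    exact h.elim
  · intro η _ x
    exact fun h => h
  · intro η _ x y z h _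
    exact h.elim
  · intro η _ x hx
    exact hx.elim
  · intro η _ x y hx _
    exact hx.elim
  · intro η _ x y _ _
    exact Or.inr rfl
  · intro η _ x y hx _
    exact hx.elim
  · intro η _ x y z hx _ _ _ _
    exact hx.elim
  · intro η _ x y _
    rfl
  · intro η _ i x hx
    exact hx.elim
  · intro η _ i x _
    rfl

theorem femp_emb (M : TreeModelN n) :
    IsEmbN n (emptyModel n) M (fun x => x.elim) :=
  ⟨fun {a} => a.elim, fun _ _ x => x.elim, fun _ _ x => x.elim,
   fun _ _ x => x.elim, fun _ _ _ x => x.elim⟩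

end Verification

end TreeAP


/-- For every `n < ω`, the class of models of `T_n^∀` has the joint
embedding property and the amalgamation property. -/
theorem treeModelN_JEP_and_AP (n : ℕ) :
    (∀ M N : TreeModelN n, IsModelN n M → IsModelN n N →
      ∃ D : TreeModelN n, IsModelN n D ∧
        ∃ (f : M.carrier → D.carrier) (g : N.carrier → D.carrier),
          IsEmbN n M D f ∧ IsEmbN n N D g) ∧
    (∀ A B C : TreeModelN n, IsModelN n A → IsModelN n B → IsModelN n C →
      ∀ (f : A.carrier → B.carrier) (g : A.carrier → C.carrier),
        IsEmbN n A B f → IsEmbN n A C g →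
        ∃ D : TreeModelN n, IsModelN n D ∧
          ∃ (f' : B.carrier → D.carrier) (g' : C.carrier → D.carrier),
            IsEmbN n B D f' ∧ IsEmbN n C D g' ∧ f' ∘ f = g' ∘ g) := by
  constructor
  · intro M N hM hN
    obtain ⟨D, hD, f', g', hf', hg', _⟩ :=
      TreeAP.APmain (TreeAP.emptyModel n) M N TreeAP.emptyModel_isModel hM hN
        (fun x => x.elim) (fun x => x.elim) (TreeAP.femp_emb M) (TreeAP.femp_emb N)
    exact ⟨D, hD, f', g', hf', hg'⟩
  · intro A B C hA hB hC f g hf hg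
    exact TreeAP.APmain A B C hA hB hC f g hf hg
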